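/- Transfer of the closing property along a line missing the conic: Let W ⊆ ℝ³ be a 2-dimensional subspace with ⟨X,X⟩ ≠ 0 for every X ∈ W \ {0} (the line ℓ does not meet the conic C). Let P₁,…,P_{2n} ∈ W \ {0} have the closing property with respect to the Minkowski form. Let B be any nondegenerate symmetric bilinear form on ℝ³ whose restriction to W is a nonzero scalar multiple of the restriction of the Minkowski form to W (so the conic D_B has the same complex intersections with ℓ as C). Then P₁,…,P_{2n} have the closing property with respect to B. -/

import Mathlib

/-- Minkowski product on ℝ³. -/
def mink (X Y : Fin 3 → ℝ) : ℝ := X 0 * Y 0 + X 1 * Y 1 - X 2 * Y 2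

/-- The reversion map with respect to the (bilinear) form `B` in the point `P`
(with `B P P ≠ 0`): `M_P^B X = B(P,P)X − 2B(X,P)P`. -/
def revB (B : (Fin 3 → ℝ) → (Fin 3 → ℝ) → ℝ) (P X : Fin 3 → ℝ) : Fin 3 → ℝ :=
  B P P • X - (2 * B X P) • P

/-- `chainB B n P X = (M_{P n}^B ∘ ⋯ ∘ M_{P 1}^B) X`, the composition of the reversions
with respect to `B` in `P 0, …, P (n-1)`, applied in this order. -/
def chainB (B : (Fin 3 → ℝ) → (Fin 3 → ℝ) → ℝ) :
    (n : ℕ) → (Fin n → (Fin 3 → ℝ)) → (Fin 3 → ℝ) → (Fin 3 → ℝ)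
  | 0, _, X => X
  | n + 1, P, X => revB B (P (Fin.last n)) (chainB B n (fun i => P i.castSucc) X)

/-- The points `P 0, …, P (n-1)` have the closing property with respect to the form `B`
iff `M_{P n}^B ∘ ⋯ ∘ M_{P 1}^B` is a nonzero scalar multiple of the identity. For
`B = mink` this is the closing property with respect to the conic `C`. -/
def closesB (B : (Fin 3 → ℝ) → (Fin 3 → ℝ) → ℝ) (n : ℕ) (P : Fin n → (Fin 3 → ℝ)) :
    Prop :=
  ∃ c : ℝ, c ≠ 0 ∧ ∀ X, chainB B n P X = c • X

section Aux

variable {B : (Fin 3 → ℝ) → (Fin 3 → ℝ) → ℝ}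

lemma B_zero_left (hBlin : ∀ (c : ℝ) (x x' y : Fin 3 → ℝ), B (c • x + x') y = c * B x y + B x' y)
    (y : Fin 3 → ℝ) : B 0 y = 0 := by
  have h := hBlin (-1) y y y
  simp at h
  linarith

lemma B_smul_left (hBlin : ∀ (c : ℝ) (x x' y : Fin 3 → ℝ), B (c • x + x') y = c * B x y + B x' y)
    (c : ℝ) (x y : Fin 3 → ℝ) : B (c • x) y = c * B x y := by
  have h := hBlin c x 0 y
  simpa [B_zero_left hBlin] using h

lemma B_add_left (hBlin : ∀ (c : ℝ) (x x' y : Fin 3 → ℝ), B (c • x + x') y = c * B x y + B x' y)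
    (x x' y : Fin 3 → ℝ) : B (x + x') y = B x y + B x' y := by
  have h := hBlin 1 x x' y
  simpa using h

lemma mink_lin : ∀ (c : ℝ) (x x' y : Fin 3 → ℝ), mink (c • x + x') y = c * mink x y + mink x' y := by
  intro c x x' y
  simp [mink, Pi.add_apply, Pi.smul_apply, smul_eq_mul]
  ring

lemma mink_symm : ∀ x y, mink x y = mink y x := by
  intro x y; simp [mink]; ring

lemma revB_lin (hBlin : ∀ (c : ℝ) (x x' y : Fin 3 → ℝ), B (c • x + x') y = c * B x y + B x' y)
    (P : Fin 3 → ℝ) (a : ℝ) (X Y : Fin 3 → ℝ) :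
    revB B P (a • X + Y) = a • revB B P X + revB B P Y := by
  unfold revB
  rw [hBlin a X Y P]
  module

lemma chainB_lin (hBlin : ∀ (c : ℝ) (x x' y : Fin 3 → ℝ), B (c • x + x') y = c * B x y + B x' y) :
    ∀ (m : ℕ) (P : Fin m → (Fin 3 → ℝ)) (a : ℝ) (X Y : Fin 3 → ℝ),
      chainB B m P (a • X + Y) = a • chainB B m P X + chainB B m P Y := by
  intro m
  induction m with
  | zero => intro P a X Y; rfl
  | succ m ih =>
      intro P a X Y
      show revB B _ _ = _
      rw [ih, revB_lin hBlin]
      rfl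

lemma chainB_orth (hBlin : ∀ (c : ℝ) (x x' y : Fin 3 → ℝ), B (c • x + x') y = c * B x y + B x' y) :
    ∀ (m : ℕ) (P : Fin m → (Fin 3 → ℝ)) (Z : Fin 3 → ℝ), (∀ i, B Z (P i) = 0) →
      chainB B m P Z = (∏ i, B (P i) (P i)) • Z := by
  intro m
  induction m with
  | zero => intro P Z hZ; simp [chainB]
  | succ m ih =>
      intro P Z hZ
      show revB B (P (Fin.last m)) _ = _
      rw [ih _ _ (fun i => hZ i.castSucc)]
      unfold revB
      rw [B_smul_left hBlin, hZ (Fin.last m), Fin.prod_univ_castSucc]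
      set s := ∏ i : Fin m, B (P i.castSucc) (P i.castSucc)
      set Q := P (Fin.last m)
      match_scalars <;> ring

end Aux

section AuxW

variable {B : (Fin 3 → ℝ) → (Fin 3 → ℝ) → ℝ} {W : Submodule ℝ (Fin 3 → ℝ)} {c : ℝ}

lemma chainB_on_W (hBlin : ∀ (c : ℝ) (x x' y : Fin 3 → ℝ), B (c • x + x') y = c * B x y + B x' y)
    (hcW : ∀ X ∈ W, ∀ Y ∈ W, B X Y = c * mink X Y) :
    ∀ (m : ℕ) (P : Fin m → (Fin 3 → ℝ)), (∀ i, P i ∈ W) → ∀ X ∈ W,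
      chainB mink m P X ∈ W ∧ chainB B m P X = c ^ m • chainB mink m P X := by
  intro m
  induction m with
  | zero => intro P hP X hX; exact ⟨hX, by simp [chainB]⟩
  | succ m ih =>
      intro P hP X hX
      obtain ⟨hmem, heq⟩ := ih (fun i => P i.castSucc) (fun i => hP i.castSucc) X hX
      set Y := chainB mink m (fun i => P i.castSucc) X with hY
      set Q := P (Fin.last m) with hQ
      have hQW : Q ∈ W := hP (Fin.last m)
      constructor
      · show revB mink Q Y ∈ W
        exact W.sub_mem (W.smul_mem _ hmem) (W.smul_mem _ hQW)
      · show revB B Q (chainB B m (fun i => P i.castSucc) X) =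
          c ^ (m + 1) • revB mink Q Y
        rw [heq]
        unfold revB
        rw [B_smul_left hBlin, hcW Q hQW Q hQW, hcW Y hmem Q hQW]
        match_scalars <;> ring

end AuxW

lemma exists_orth_vec (W : Submodule ℝ (Fin 3 → ℝ)) (hdim : Module.finrank ℝ W = 2)
    (B' : (Fin 3 → ℝ) → (Fin 3 → ℝ) → ℝ)
    (hBlin' : ∀ (c : ℝ) (x x' y : Fin 3 → ℝ), B' (c • x + x') y = c * B' x y + B' x' y)
    (hBsymm' : ∀ x y, B' x y = B' y x) :
    ∃ Z : Fin 3 → ℝ, Z ≠ 0 ∧ ∀ w ∈ W, B' Z w = 0 := by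
  classical
  let bW : Module.Basis (Fin 2) ℝ W := Module.finBasisOfFinrankEq ℝ W hdim
  let L : (Fin 3 → ℝ) →ₗ[ℝ] (Fin 2 → ℝ) :=
    { toFun := fun X i => B' X ((bW i : W) : Fin 3 → ℝ)
      map_add' := fun x y => funext fun i => B_add_left hBlin' x y _
      map_smul' := fun r x => funext fun i => by
        simpa using B_smul_left hBlin' r x ((bW i : W) : Fin 3 → ℝ) }
  have hni : ¬ Function.Injective L := by
    intro hinj
    have hle := LinearMap.finrank_le_finrank_of_injective hinj
    have h3 : Module.finrank ℝ (Fin 3 → ℝ) = 3 := by simp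
    have h2 : Module.finrank ℝ (Fin 2 → ℝ) = 2 := by simp
    rw [h3, h2] at hle
    omega
  rw [Function.not_injective_iff] at hni
  obtain ⟨x, y, hxy, hne⟩ := hni
  refine ⟨x - y, sub_ne_zero.mpr hne, ?_⟩
  have hLZ : L (x - y) = 0 := by rw [map_sub, hxy, sub_self]
  have hbasis : ∀ i : Fin 2, B' (x - y) ((bW i : W) : Fin 3 → ℝ) = 0 := fun i => by
    simpa [L] using congrFun hLZ i
  have h2add : ∀ a b b' : Fin 3 → ℝ, B' a (b + b') = B' a b + B' a b' := fun a b b' => by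
    rw [hBsymm', B_add_left hBlin', hBsymm' b a, hBsymm' b' a]
  have h2smul : ∀ (r : ℝ) (a b : Fin 3 → ℝ), B' a (r • b) = r * B' a b := fun r a b => by
    rw [hBsymm', B_smul_left hBlin', hBsymm' b a]
  let ψ : W →ₗ[ℝ] ℝ :=
    { toFun := fun v => B' (x - y) (v : Fin 3 → ℝ)
      map_add' := fun v v' => by simp [h2add]
      map_smul' := fun r v => by simp [h2smul] }
  have hψ : ψ = 0 := bW.ext fun i => by simpa [ψ] using hbasis i
  intro w hw
  have := LinearMap.congr_fun hψ ⟨w, hw⟩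
  simpa [ψ] using this

/-- **Transfer of the closing property along a line missing the conic.**
If the line `W` does not meet the conic `C` and `P 0, …, P (2n-1)` on `W` have the
closing property with respect to the Minkowski form, then they have the closing
property with respect to any nondegenerate symmetric bilinear form `B` whose
restriction to `W` is a nonzero scalar multiple of the restriction of the Minkowski
form to `W` (so the corresponding conic has the same complex intersections with the
line as `C`). -/
theorem closing_transfer_missing
    (W : Submodule ℝ (Fin 3 → ℝ)) (hdim : Module.finrank ℝ W = 2)
    (hmiss : ∀ X ∈ W, X ≠ 0 → mink X X ≠ 0)
    (n : ℕ) (P : Fin (2 * n) → (Fin 3 → ℝ))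
    (hPW : ∀ i, P i ∈ W) (hP0 : ∀ i, P i ≠ 0)
    (hclose : closesB mink (2 * n) P)
    (B : (Fin 3 → ℝ) → (Fin 3 → ℝ) → ℝ)
    (hBlin : ∀ (c : ℝ) (x x' y : Fin 3 → ℝ), B (c • x + x') y = c * B x y + B x' y)
    (hBsymm : ∀ x y, B x y = B y x)
    (hBnd : ∀ x, (∀ y, B x y = 0) → x = 0)
    (hBW : ∃ c : ℝ, c ≠ 0 ∧ ∀ X ∈ W, ∀ Y ∈ W, B X Y = c * mink X Y) :
    closesB B (2 * n) P := by
  classical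
  obtain ⟨c, hc, hcW⟩ := hBW
  obtain ⟨c0, hc0, hch⟩ := hclose
  obtain ⟨Zm, hZm0, hZmorth⟩ := exists_orth_vec W hdim mink mink_lin mink_symm
  obtain ⟨Zb, hZb0, hZborth⟩ := exists_orth_vec W hdim B hBlin hBsymm
  have hprod : (∏ i, mink (P i) (P i)) = c0 := by
    have h1 := chainB_orth mink_lin (2 * n) P Zm (fun i => hZmorth (P i) (hPW i))
    rw [hch Zm] at h1
    have h2 : (c0 - ∏ i, mink (P i) (P i)) • Zm = 0 := by rw [sub_smul, h1, sub_self]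
    rcases smul_eq_zero.mp h2 with h | h
    · linarith
    · exact absurd h hZm0
  have hprodB : (∏ i, B (P i) (P i)) = c ^ (2 * n) * c0 := by
    calc ∏ i, B (P i) (P i) = ∏ i, c * mink (P i) (P i) :=
          Finset.prod_congr rfl (fun i _ => hcW _ (hPW i) _ (hPW i))
      _ = c ^ (2 * n) * ∏ i, mink (P i) (P i) := by
          rw [Finset.prod_mul_distrib, Finset.prod_const]
          simp
      _ = c ^ (2 * n) * c0 := by rw [hprod]
  have hZbW : Zb ∉ W := by
    intro h
    have h0 : B Zb Zb = 0 := hZborth Zb h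
    rw [hcW Zb h Zb h] at h0
    have hm : mink Zb Zb = 0 := by
      rcases mul_eq_zero.mp h0 with h' | h'
      · exact absurd h' hc
      · exact h'
    exact hmiss Zb h hZb0 hm
  have hsup : W ⊔ Submodule.span ℝ {Zb} = ⊤ := by
    have hdisj : W ⊓ Submodule.span ℝ {Zb} = ⊥ := by
      rw [eq_bot_iff]
      rintro x hx
      obtain ⟨hxW, hxS⟩ := Submodule.mem_inf.mp hx
      obtain ⟨t, rfl⟩ := Submodule.mem_span_singleton.mp hxS
      rcases eq_or_ne t 0 with rfl | ht
      · simp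
      · have hmem : Zb ∈ W := by
          have := W.smul_mem t⁻¹ hxW
          rwa [smul_smul, inv_mul_cancel₀ ht, one_smul] at this
        exact absurd hmem hZbW
    apply Submodule.eq_top_of_finrank_eq
    have hsum := Submodule.finrank_sup_add_finrank_inf_eq W (Submodule.span ℝ {Zb})
    rw [hdisj, finrank_span_singleton hZb0, hdim] at hsum
    simp only [finrank_bot, add_zero] at hsum
    have h3 : Module.finrank ℝ (Fin 3 → ℝ) = 3 := by simp
    rw [h3]
    omega
  refine ⟨c ^ (2 * n) * c0, mul_ne_zero (pow_ne_zero _ hc) hc0, ?_⟩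
  intro X
  have hXmem : X ∈ W ⊔ Submodule.span ℝ {Zb} := hsup.symm ▸ Submodule.mem_top
  obtain ⟨w, hw, z, hz, rfl⟩ := Submodule.mem_sup.mp hXmem
  obtain ⟨t, rfl⟩ := Submodule.mem_span_singleton.mp hz
  have hw' := (chainB_on_W hBlin hcW (2 * n) P hPW w hw).2
  rw [hch w] at hw'
  have hZb' := chainB_orth hBlin (2 * n) P Zb (fun i => hZborth (P i) (hPW i))
  rw [hprodB] at hZb'
  rw [show w + t • Zb = t • Zb + w from add_comm _ _, chainB_lin hBlin, hw', hZb']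
  module
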